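/- Let a > 0, c > 0, λ ≥ 0, let h : ℝ → ℝ be continuous and bounded, and let I : ℝ → ℝ be continuous, bounded, and nonnegative. Define G₁(t) = ∫_{τ ∈ (-∞, t]} h(τ) · exp(-c·∫_τ^t I(s) ds) · exp(-λ(t-τ)) · g_a^1(t - τ) dτ. Then for every t ∈ ℝ, G₁ is differentiable at t with G₁'(t) = a·h(t) - (c·I(t) + λ + a)·G₁(t). -/

import Mathlib

open Real MeasureTheory

/-- Erlang density with shape parameter `i` and rate parameter `a`. -/
noncomputable def erlang (a : ℝ) (i : ℕ) (t : ℝ) : ℝ :=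
  a ^ i * t ^ (i - 1) * Real.exp (-a * t) / (Nat.factorial (i - 1))

lemma exp_mul_integrableOn_Iic {b t : ℝ} (hb : 0 < b) :
    MeasureTheory.IntegrableOn (fun τ : ℝ => Real.exp (b * τ)) (Set.Iic t) := by
  have hcont : Continuous fun τ : ℝ => Real.exp (b * τ) :=
    Real.continuous_exp.comp (continuous_const.mul continuous_id)
  refine MeasureTheory.integrableOn_Iic_of_intervalIntegral_norm_bounded
    (l := Filter.atBot) (a := fun i : ℝ => i) (Real.exp (b * t) / b) t
    (fun i => hcont.integrableOn_Ioc) Filter.tendsto_id ?_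
  filter_upwards [Filter.eventually_le_atBot t] with i hi
  have hnorm : (∫ x in i..t, ‖Real.exp (b * x)‖) = ∫ x in i..t, Real.exp (b * x) := by
    congr 1; funext x; rw [Real.norm_eq_abs, abs_of_pos (Real.exp_pos _)]
  rw [hnorm]
  have hcalc : (∫ x in i..t, Real.exp (b * x)) = b⁻¹ * (Real.exp (b * t) - Real.exp (b * i)) := by
    rw [intervalIntegral.integral_comp_mul_left (fun x => Real.exp x) hb.ne']
    rw [integral_exp, smul_eq_mul]
  rw [hcalc]
  have := Real.exp_pos (b * i)
  rw [div_eq_inv_mul]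
  have hbinv : (0:ℝ) ≤ b⁻¹ := by positivity
  nlinarith

theorem linear_chain_infection_base (a c lam : ℝ) (ha : 0 < a) (hc : 0 < c) (hlam : 0 ≤ lam)
    (h I : ℝ → ℝ)
    (hcont : Continuous h) (hbdd : ∃ M : ℝ, ∀ t : ℝ, |h t| ≤ M)
    (hIcont : Continuous I) (hIbdd : ∃ M : ℝ, ∀ t : ℝ, |I t| ≤ M)
    (hIpos : ∀ t : ℝ, 0 ≤ I t)
    (G₁ : ℝ → ℝ)
    (hG₁ : ∀ t : ℝ, G₁ t = ∫ τ in Set.Iic t,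
      h τ * Real.exp (-c * ∫ s in τ..t, I s) * Real.exp (-lam * (t - τ)) * erlang a 1 (t - τ)) :
    ∀ t : ℝ, HasDerivAt G₁ (a * h t - (c * I t + lam + a) * G₁ t) t := by
  obtain ⟨M, hM⟩ := hbdd
  have hM0 : (0:ℝ) ≤ M := le_trans (abs_nonneg _) (hM 0)
  set K : ℝ → ℝ := fun u => ∫ s in (0:ℝ)..u, I s with hKdef
  have hII : ∀ u v : ℝ, IntervalIntegrable I volume u v := fun u v =>
    hIcont.intervalIntegrable u v
  have hKderiv : ∀ u : ℝ, HasDerivAt K (I u) u := fun u =>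
    intervalIntegral.integral_hasDerivAt_right (hII 0 u)
      hIcont.stronglyMeasurable.stronglyMeasurableAtFilter hIcont.continuousAt
  have hKdiff : Differentiable ℝ K := fun u => (hKderiv u).differentiableAt
  have hKcont : Continuous K := hKdiff.continuous
  have hKsub : ∀ τ t : ℝ, K t - K τ = ∫ s in τ..t, I s := fun τ t =>
    intervalIntegral.integral_interval_sub_left (hII 0 t) (hII 0 τ)
  have hKmono : ∀ ⦃τ t : ℝ⦄, τ ≤ t → K τ ≤ K t := by
    intro τ t hτt
    have h0 : 0 ≤ ∫ s in τ..t, I s :=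
      intervalIntegral.integral_nonneg hτt (fun s _ => hIpos s)
    linarith [hKsub τ t]
  set f : ℝ → ℝ := fun τ => h τ * Real.exp ((lam + a) * τ + c * K τ) with hfdef
  have hfcont : Continuous f :=
    hcont.mul (Real.continuous_exp.comp
      ((continuous_const.mul continuous_id).add (continuous_const.mul hKcont)))
  have hfint : ∀ t : ℝ, IntegrableOn f (Set.Iic t) := by
    intro t
    refine Integrable.mono'
      (((exp_mul_integrableOn_Iic (show (0:ℝ) < lam + a by linarith) (t := t))).const_mul
        (M * Real.exp (c * K t)))
      hfcont.aestronglyMeasurable.restrict ?_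
    refine (ae_restrict_iff' measurableSet_Iic).2 (Filter.Eventually.of_forall fun τ hτ => ?_)
    have h1 : |h τ| ≤ M := hM τ
    have h2 : Real.exp ((lam + a) * τ + c * K τ)
        ≤ Real.exp (c * K t) * Real.exp ((lam + a) * τ) := by
      rw [← Real.exp_add]
      refine Real.exp_le_exp.2 ?_
      have := hKmono hτ
      nlinarith [hc.le]
    have hτle : τ ≤ t := hτ
    calc ‖f τ‖ = |h τ| * Real.exp ((lam + a) * τ + c * K τ) := by
          rw [hfdef]
          simp [Real.norm_eq_abs, abs_mul, abs_of_pos (Real.exp_pos _)]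
      _ ≤ M * (Real.exp (c * K t) * Real.exp ((lam + a) * τ)) :=
          mul_le_mul h1 h2 (Real.exp_pos _).le hM0
      _ = M * Real.exp (c * K t) * Real.exp ((lam + a) * τ) := by ring
  set J : ℝ → ℝ := fun u => ∫ τ in Set.Iic u, f τ with hJdef
  set F : ℝ → ℝ := fun u => a * Real.exp (-((lam + a) * u + c * K u)) with hFdef
  have hrepr : ∀ t : ℝ, G₁ t = F t * J t := by
    intro t
    rw [hG₁, hJdef, hFdef]
    simp only
    rw [← MeasureTheory.integral_const_mul]
    refine MeasureTheory.integral_congr_ae (Filter.Eventually.of_forall fun τ => ?_)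
    dsimp only
    rw [← hKsub τ t]
    have e1 : ∀ x y : ℝ, Real.exp x * Real.exp y = Real.exp (x + y) := fun x y =>
      (Real.exp_add x y).symm
    have herl : erlang a 1 (t - τ) = a * Real.exp (-a * (t - τ)) := by
      simp [erlang]
    rw [herl]
    calc h τ * Real.exp (-c * (K t - K τ)) * Real.exp (-lam * (t - τ)) *
          (a * Real.exp (-a * (t - τ)))
        = a * h τ * (Real.exp (-c * (K t - K τ)) * Real.exp (-lam * (t - τ)) *
            Real.exp (-a * (t - τ))) := by ring
      _ = a * h τ * Real.exp (-c * (K t - K τ) + -lam * (t - τ) + -a * (t - τ)) := by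
            rw [e1, e1]
      _ = a * h τ * Real.exp (-((lam + a) * t + c * K t) + ((lam + a) * τ + c * K τ)) := by
            rw [show -c * (K t - K τ) + -lam * (t - τ) + -a * (t - τ)
              = -((lam + a) * t + c * K t) + ((lam + a) * τ + c * K τ) by ring]
      _ = a * Real.exp (-((lam + a) * t + c * K t)) *
            (h τ * Real.exp ((lam + a) * τ + c * K τ)) := by
            rw [← e1]; ring
  intro t
  have hJderiv : HasDerivAt J (f t) t := by
    have base : HasDerivAt (fun u => (∫ τ in Set.Iic (t - 1), f τ) + ∫ τ in (t - 1)..u, f τ)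
        (f t) t := by
      have hd := intervalIntegral.integral_hasDerivAt_right
        (hfcont.intervalIntegrable (t - 1) t)
        hfcont.stronglyMeasurable.stronglyMeasurableAtFilter hfcont.continuousAt
      exact hd.const_add _
    refine base.congr_of_eventuallyEq (Filter.Eventually.of_forall fun u => ?_)
    have := intervalIntegral.integral_Iic_sub_Iic (hfint (t - 1)) (hfint u)
    rw [hJdef]
    simp only
    linarith
  have hX : HasDerivAt (fun u => (lam + a) * u + c * K u) ((lam + a) + c * I t) t := by
    have h1 := (hasDerivAt_id t).const_mul (lam + a)
    have h2 := (hKderiv t).const_mul c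
    exact (h1.add h2).congr_deriv (by ring)
  have hF : HasDerivAt F
      (a * (Real.exp (-((lam + a) * t + c * K t)) * (-((lam + a) + c * I t)))) t := by
    exact hX.neg.exp.const_mul a
  have hprod : HasDerivAt (fun u => F u * J u) _ t := hF.mul hJderiv
  have hGfun : G₁ = fun u => F u * J u := funext hrepr
  rw [hGfun]
  convert hprod using 1
  have hcancel : Real.exp (-((lam + a) * t + c * K t)) *
      Real.exp ((lam + a) * t + c * K t) = 1 := by
    rw [← Real.exp_add, show -((lam + a) * t + c * K t) + ((lam + a) * t + c * K t) = 0 by ring,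
      Real.exp_zero]
  simp only [hFdef, hfdef, hJdef]
  linear_combination (-(a * h t * ∫ τ in Set.Iic t, f τ) * 0 + (-(a * h t))) * hcancel
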